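/- If the convex hull of a point set S is a triangle with vertex set {p,q,r} and S₁ = S \ {p,q,r}, then every j-edge of S₁ is either a (j+1)-edge or a (j+2)-edge of S. -/

import Mathlib

open Finset
open scoped Classical

abbrev Pt : Type := ℝ × ℝ

/-- Twice the signed area of the triangle `a b c`; its sign is the orientation. -/
noncomputable def det3 (a b c : Pt) : ℝ :=
  (b.1 - a.1) * (c.2 - a.2) - (b.2 - a.2) * (c.1 - a.1)

/-- `S` is in general position: no three of its points are collinear. -/
def GenPos (S : Finset Pt) : Prop :=
  ∀ a ∈ S, ∀ b ∈ S, ∀ c ∈ S, a ≠ b → a ≠ c → b ≠ c → det3 a b c ≠ 0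

/-- A finite point set is in convex position. -/
def ConvexPos (Q : Finset Pt) : Prop :=
  ∀ x ∈ Q, x ∉ convexHull ℝ (↑(Q.erase x) : Set Pt)

/-- `crN S` : the number of 4-element subsets of `S` in convex position. -/
noncomputable def crN (S : Finset Pt) : ℕ :=
  ((S.powersetCard 4).filter ConvexPos).card

/-- Number of points of `S` strictly to the left of the directed line `p → q`. -/
noncomputable def sideCount (S : Finset Pt) (p q : Pt) : ℕ :=
  (S.filter (fun x => 0 < det3 p q x)).card

/-- `{p, q}` is a `j`-edge of `S`: exactly `j` points of `S` lie in one of the open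
half-planes bounded by the line through `p` and `q`. -/
def IsJEdge (S : Finset Pt) (j : ℕ) (p q : Pt) : Prop :=
  p ∈ S ∧ q ∈ S ∧ p ≠ q ∧ (sideCount S p q = j ∨ sideCount S q p = j)

/-- `ej S j` : the number of (unordered) `j`-edges of `S`. -/
noncomputable def ej (S : Finset Pt) (j : ℕ) : ℕ :=
  ((S.powersetCard 2).filter (fun e => ∃ p q : Pt, e = {p, q} ∧ IsJEdge S j p q)).card

/-- `Ek S k` : the number of `(≤ k)`-edges of `S`. -/
noncomputable def Ek (S : Finset Pt) (k : ℕ) : ℕ :=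
  ((S.powersetCard 2).filter
    (fun e => ∃ p q : Pt, e = {p, q} ∧ ∃ j ≤ k, IsJEdge S j p q)).card

/-- The vertices of the convex hull of `S` (its extreme points). -/
noncomputable def hullVertices (S : Finset Pt) : Finset Pt :=
  S.filter (fun x => x ∉ convexHull ℝ (↑(S.erase x) : Set Pt))

lemma det3_self_right (u v : Pt) : det3 u v u = 0 := by
  simp [det3]

lemma det3_swap (u v x : Pt) : det3 v u x = - det3 u v x := by
  simp only [det3]; ring

lemma det3_comb (u v p q r : Pt) (α β γ : ℝ) (h : α + β + γ = 1) :
    det3 u v (α • p + (β • q + γ • r)) =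
      α * det3 u v p + β * det3 u v q + γ * det3 u v r := by
  have hγ : γ = 1 - α - β := by linarith
  subst hγ
  simp only [det3, Prod.fst_add, Prod.snd_add, Prod.smul_fst, Prod.smul_snd, smul_eq_mul]
  ring

lemma subset_hull (S : Finset Pt) :
    (↑S : Set Pt) ⊆ convexHull ℝ (↑(hullVertices S) : Set Pt) := by
  classical
  have hconv : Convex ℝ (convexHull ℝ (↑S : Set Pt)) := convex_convexHull ℝ _
  have hcomp : IsCompact (convexHull ℝ (↑S : Set Pt)) :=
    S.finite_toSet.isCompact_convexHull (𝕜 := ℝ)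
  have hES : (convexHull ℝ (↑S : Set Pt)).extremePoints ℝ ⊆ ↑S :=
    extremePoints_convexHull_subset
  have hclosed : IsClosed (convexHull ℝ ((convexHull ℝ (↑S : Set Pt)).extremePoints ℝ)) :=
    (S.finite_toSet.subset hES).isClosed_convexHull (𝕜 := ℝ)
  have h1 : convexHull ℝ ((convexHull ℝ (↑S : Set Pt)).extremePoints ℝ)
      = convexHull ℝ (↑S : Set Pt) := by
    rw [← hclosed.closure_eq]
    exact closure_convexHull_extremePoints hcomp hconv
  have hEhv : (convexHull ℝ (↑S : Set Pt)).extremePoints ℝ ⊆ ↑(hullVertices S) := by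
    intro x hx
    have hx' := (hconv.mem_extremePoints_iff_mem_diff_convexHull_diff).1 hx
    have hxS : x ∈ S := hES hx
    have hsub : (↑(S.erase x) : Set Pt) ⊆ convexHull ℝ (↑S : Set Pt) \ {x} := by
      intro y hy
      rcases Finset.mem_coe.1 hy with hy'
      exact ⟨subset_convexHull ℝ _ (Finset.mem_coe.2 (Finset.mem_of_mem_erase hy')),
        Finset.ne_of_mem_erase hy'⟩
    have : x ∉ convexHull ℝ (↑(S.erase x) : Set Pt) := fun hmem =>
      hx'.2 (convexHull_mono hsub hmem)
    simp only [hullVertices, Finset.coe_filter, Set.mem_setOf_eq]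
    exact ⟨hxS, this⟩
  intro x hxS
  have hxA : x ∈ convexHull ℝ (↑S : Set Pt) := subset_convexHull ℝ _ hxS
  rw [← h1] at hxA
  exact convexHull_mono hEhv hxA

lemma not_all_pos (u v a p q r : Pt) (hpq : p ≠ q) (hpr : p ≠ r) (hqr : q ≠ r)
    (h0 : det3 u v a = 0)
    (ha : a ∈ convexHull ℝ (↑({p, q, r} : Finset Pt) : Set Pt)) :
    ¬ (0 < det3 u v p ∧ 0 < det3 u v q ∧ 0 < det3 u v r) := by
  classical
  rintro ⟨hp, hq, hr⟩
  rw [Finset.convexHull_eq] at ha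
  obtain ⟨w, hw0, hw1, hwc⟩ := ha
  have hpm : p ∉ ({q, r} : Finset Pt) := by simp [hpq, hpr]
  have hqm : q ∉ ({r} : Finset Pt) := by simp [hqr]
  have hsum : w p + (w q + w r) = 1 := by
    rwa [Finset.sum_insert hpm, Finset.sum_insert hqm, Finset.sum_singleton] at hw1
  have hwc' : w p • p + (w q • q + w r • r) = a := by
    rw [Finset.centerMass_eq_of_sum_1 _ _ hw1] at hwc
    rwa [Finset.sum_insert hpm, Finset.sum_insert hqm, Finset.sum_singleton] at hwc
  have hdet : w p * det3 u v p + w q * det3 u v q + w r * det3 u v r = 0 := by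
    rw [← det3_comb u v p q r (w p) (w q) (w r) (by linarith), hwc', h0]
  have hwp : 0 ≤ w p := hw0 p (by simp)
  have hwq : 0 ≤ w q := hw0 q (by simp)
  have hwr : 0 ≤ w r := hw0 r (by simp)
  have h1 : w p * det3 u v p = 0 := by
    nlinarith [mul_nonneg hwp hp.le, mul_nonneg hwq hq.le, mul_nonneg hwr hr.le]
  have h2 : w q * det3 u v q = 0 := by
    nlinarith [mul_nonneg hwp hp.le, mul_nonneg hwq hq.le, mul_nonneg hwr hr.le]
  have h3 : w r * det3 u v r = 0 := by
    nlinarith [mul_nonneg hwp hp.le, mul_nonneg hwq hq.le, mul_nonneg hwr hr.le]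
  have hp0 : w p = 0 := (mul_eq_zero.1 h1).resolve_right hp.ne'
  have hq0 : w q = 0 := (mul_eq_zero.1 h2).resolve_right hq.ne'
  have hr0 : w r = 0 := (mul_eq_zero.1 h3).resolve_right hr.ne'
  rw [hp0, hq0, hr0] at hsum
  norm_num at hsum

/-- if the convex hull of `S` is the triangle `p q r` and
`S₁ = S \ {p,q,r}`, then every `j`-edge of `S₁` is a `(j+1)`-edge or a
`(j+2)`-edge of `S`. -/
theorem statement10 (S : Finset Pt) (hgp : GenPos S) (p q r : Pt)
    (hpq : p ≠ q) (hpr : p ≠ r) (hqr : q ≠ r)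
    (hhull : hullVertices S = {p, q, r}) (j : ℕ) (a b : Pt)
    (hedge : IsJEdge (S \ {p, q, r}) j a b) :
    IsJEdge S (j + 1) a b ∨ IsJEdge S (j + 2) a b := by
  classical
  obtain ⟨haS₁, hbS₁, hab, hside⟩ := hedge
  have haS : a ∈ S := (Finset.mem_sdiff.1 haS₁).1
  have haT : a ∉ ({p, q, r} : Finset Pt) := (Finset.mem_sdiff.1 haS₁).2
  have hbS : b ∈ S := (Finset.mem_sdiff.1 hbS₁).1
  have hbT : b ∉ ({p, q, r} : Finset Pt) := (Finset.mem_sdiff.1 hbS₁).2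
  have hTS : ({p, q, r} : Finset Pt) ⊆ S := by
    rw [← hhull]; exact Finset.filter_subset _ _
  have hnz : ∀ x ∈ ({p, q, r} : Finset Pt), det3 a b x ≠ 0 := by
    intro x hx
    exact hgp a haS b hbS x (hTS hx) hab
      (by rintro rfl; exact haT hx) (by rintro rfl; exact hbT hx)
  have hsplit : ∀ u v : Pt, sideCount S u v
      = sideCount (S \ {p, q, r}) u v
        + ((({p, q, r} : Finset Pt)).filter (fun x => 0 < det3 u v x)).card := by
    intro u v
    unfold sideCount
    rw [← Finset.sdiff_union_of_subset hTS, Finset.filter_union,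
      Finset.card_union_of_disjoint (Finset.disjoint_filter_filter Finset.sdiff_disjoint),
      Finset.sdiff_union_of_subset hTS]
  have haHull : a ∈ convexHull ℝ (↑({p, q, r} : Finset Pt) : Set Pt) := by
    have := subset_hull S (Finset.mem_coe.2 haS)
    rwa [hhull] at this
  have hba0 : det3 b a a = 0 := by rw [det3_swap a b a, det3_self_right, neg_zero]
  have notpos1 := not_all_pos a b a p q r hpq hpr hqr (det3_self_right a b) haHull
  have notpos2 := not_all_pos b a a p q r hpq hpr hqr hba0 haHull
  have finish : ∀ t1 t2 : ℕ, (t1 = 1 ∧ t2 = 2) ∨ (t1 = 2 ∧ t2 = 1) →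
      ((({p, q, r} : Finset Pt)).filter (fun x => 0 < det3 a b x)).card = t1 →
      ((({p, q, r} : Finset Pt)).filter (fun x => 0 < det3 b a x)).card = t2 →
      IsJEdge S (j + 1) a b ∨ IsJEdge S (j + 2) a b := by
    rintro t1 t2 (⟨rfl, rfl⟩ | ⟨rfl, rfl⟩) h1 h2
    · rcases hside with h | h
      · exact Or.inl ⟨haS, hbS, hab, Or.inl (by rw [hsplit a b, h, h1])⟩
      · exact Or.inr ⟨haS, hbS, hab, Or.inr (by rw [hsplit b a, h, h2])⟩
    · rcases hside with h | h
      · exact Or.inr ⟨haS, hbS, hab, Or.inl (by rw [hsplit a b, h, h1])⟩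
      · exact Or.inl ⟨haS, hbS, hab, Or.inr (by rw [hsplit b a, h, h2])⟩
  rcases (hnz p (by simp)).lt_or_gt with hp | hp
  · rcases (hnz q (by simp)).lt_or_gt with hq | hq
    · rcases (hnz r (by simp)).lt_or_gt with hr | hr
      · exact absurd ⟨by rw [det3_swap a b p]; linarith,
          by rw [det3_swap a b q]; linarith,
          by rw [det3_swap a b r]; linarith⟩ notpos2
      · exact finish 1 2 (Or.inl ⟨rfl, rfl⟩)
          (by simp [Finset.filter_insert, Finset.filter_singleton, hp.not_gt, hq.not_gt,
            hr, hpq, hpr, hqr])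
          (by simp [Finset.filter_insert, Finset.filter_singleton, det3_swap a b, neg_pos,
            hp, hq, asymm hr, hpq, hpr, hqr])
    · rcases (hnz r (by simp)).lt_or_gt with hr | hr
      · exact finish 1 2 (Or.inl ⟨rfl, rfl⟩)
          (by simp [Finset.filter_insert, Finset.filter_singleton, hp.not_gt, hq,
            hr.not_gt, hpq, hpr, hqr])
          (by simp [Finset.filter_insert, Finset.filter_singleton, det3_swap a b, neg_pos,
            hp, asymm hq, hr, hpq, hpr, hqr])
      · exact finish 2 1 (Or.inr ⟨rfl, rfl⟩)
          (by simp [Finset.filter_insert, Finset.filter_singleton, hp.not_gt, hq,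
            hr, hpq, hpr, hqr])
          (by simp [Finset.filter_insert, Finset.filter_singleton, det3_swap a b, neg_pos,
            hp, asymm hq, asymm hr, hpq, hpr, hqr])
  · rcases (hnz q (by simp)).lt_or_gt with hq | hq
    · rcases (hnz r (by simp)).lt_or_gt with hr | hr
      · exact finish 1 2 (Or.inl ⟨rfl, rfl⟩)
          (by simp [Finset.filter_insert, Finset.filter_singleton, hp, hq.not_gt,
            hr.not_gt, hpq, hpr, hqr])
          (by simp [Finset.filter_insert, Finset.filter_singleton, det3_swap a b, neg_pos,
            asymm hp, hq, hr, hpq, hpr, hqr])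
      · exact finish 2 1 (Or.inr ⟨rfl, rfl⟩)
          (by simp [Finset.filter_insert, Finset.filter_singleton, hp, hq.not_gt,
            hr, hpq, hpr, hqr])
          (by simp [Finset.filter_insert, Finset.filter_singleton, det3_swap a b, neg_pos,
            asymm hp, hq, asymm hr, hpq, hpr, hqr])
    · rcases (hnz r (by simp)).lt_or_gt with hr | hr
      · exact finish 2 1 (Or.inr ⟨rfl, rfl⟩)
          (by simp [Finset.filter_insert, Finset.filter_singleton, hp, hq,
            hr.not_gt, hpq, hpr, hqr])
          (by simp [Finset.filter_insert, Finset.filter_singleton, det3_swap a b, neg_pos,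
            asymm hp, asymm hq, hr, hpq, hpr, hqr])
      · exact absurd ⟨hp, hq, hr⟩ notpos1
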